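/- Let μ ∈ ℝ, let A : ℝ → ℝ be smooth, let 𝔄 : ℝ → ℝ be smooth with 𝔄′ = A, and set f(x) = e^{μ·arctan x}(x²+1)^{−3/2}, h(x) = e^{μ·arctan x}(x²+1)^{−1/2} on ℝ. Then for every smooth solution u : ℝ × ℝ → ℝ of the equation f(x)u_t = (A(u)u_x)_x + h(x)u_x (the case B = 1), both pairs F₁ = f(x)e^{μt}(x·cos t + sin t)u, G₁ = −e^{μt}(x·cos t + sin t)(A(u)u_x + h(x)u) + e^{μt}cos t·𝔄(u) and F₂ = f(x)e^{μt}(x·sin t − cos t)u, G₂ = −e^{μt}(x·sin t − cos t)(A(u)u_x + h(x)u) + e^{μt}sin t·𝔄(u) satisfy the conservation-law identity ∂_t F + ∂_x G = 0 at every point of ℝ × ℝ. -/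

import Mathlib

open Set Real
open scoped ContDiff

/-- For the equation `f(x) u_t = (A(u) u_x)_x + h(x) u_x` on `ℝ` with
`f(x) = e^{μ arctan x} (x²+1)^{-3/2}`, `h(x) = e^{μ arctan x} (x²+1)^{-1/2}` (the case
`B = 1`), both pairs
`F₁ = f(x) e^{μt} (x cos t + sin t) u`,
`G₁ = -e^{μt}(x cos t + sin t)(A(u) u_x + h(x) u) + e^{μt} cos t · 𝔄(u)` and
`F₂ = f(x) e^{μt} (x sin t - cos t) u`,
`G₂ = -e^{μt}(x sin t - cos t)(A(u) u_x + h(x) u) + e^{μt} sin t · 𝔄(u)`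
(where `𝔄' = A`) are conserved vectors. -/
theorem conservation_laws_case_B_one_f_arctan
    (μ : ℝ) (A FA : ℝ → ℝ) (hA : ContDiff ℝ ∞ A)
    (hFA : ContDiff ℝ ∞ FA) (hFA' : ∀ v : ℝ, HasDerivAt FA (A v) v)
    (f h : ℝ → ℝ)
    (hfdef : ∀ x : ℝ, f x = Real.exp (μ * Real.arctan x) * (x^2 + 1) ^ (-(3:ℝ)/2))
    (hhdef : ∀ x : ℝ, h x = Real.exp (μ * Real.arctan x) * (x^2 + 1) ^ (-(1:ℝ)/2))
    (u : ℝ → ℝ → ℝ)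
    (hu : ContDiff ℝ ∞ (fun p : ℝ × ℝ => u p.1 p.2))
    (hpde : ∀ t x : ℝ,
      f x * deriv (fun s => u s x) t
        = deriv (fun y => A (u t y) * deriv (fun z => u t z) y) x
          + h x * deriv (fun y => u t y) x) :
    ∀ t x : ℝ,
      (deriv (fun s => f x * Real.exp (μ * s) * (x * Real.cos s + Real.sin s) * u s x) t
        + deriv (fun y =>
            -(Real.exp (μ * t) * (y * Real.cos t + Real.sin t)
                * (A (u t y) * deriv (fun z => u t z) y + h y * u t y))
              + Real.exp (μ * t) * Real.cos t * FA (u t y)) x = 0)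
      ∧ (deriv (fun s => f x * Real.exp (μ * s) * (x * Real.sin s - Real.cos s) * u s x) t
        + deriv (fun y =>
            -(Real.exp (μ * t) * (y * Real.sin t - Real.cos t)
                * (A (u t y) * deriv (fun z => u t z) y + h y * u t y))
              + Real.exp (μ * t) * Real.sin t * FA (u t y)) x = 0) := by
  intro t x
  have hudiff : Differentiable ℝ (fun p : ℝ × ℝ => u p.1 p.2) := hu.differentiable (by norm_num)
  have hgpos : (0:ℝ) < x^2 + 1 := by positivity
  have hP : ((x:ℝ)^2+1)^(-(1:ℝ)/2) = (x^2+1)^(-(3:ℝ)/2) * (x^2+1) := by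
    rw [show (-(1:ℝ)/2) = (-(3:ℝ)/2) + 1 by norm_num, Real.rpow_add hgpos, Real.rpow_one]
  -- partial derivative in x as a function
  have hder : ∀ y : ℝ, HasDerivAt (fun z => u t z)
      (fderiv ℝ (fun p : ℝ × ℝ => u p.1 p.2) (t, y) ((0:ℝ), (1:ℝ))) y := fun y =>
    ((hudiff (t, y)).hasFDerivAt.comp_hasDerivAt y
      (HasDerivAt.prodMk (hasDerivAt_const y t) (hasDerivAt_id y)))
  have huxd : Differentiable ℝ (fun y : ℝ => deriv (fun z => u t z) y) := by
    have hfderiv : ContDiff ℝ ∞ (fderiv ℝ (fun p : ℝ × ℝ => u p.1 p.2)) :=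
      hu.fderiv_right (le_of_eq (by simp))
    have h2 : Differentiable ℝ
        (fun y : ℝ => fderiv ℝ (fun p : ℝ × ℝ => u p.1 p.2) (t, y) ((0:ℝ),(1:ℝ))) :=
      ((hfderiv.comp (contDiff_const.prodMk contDiff_id)).clm_apply contDiff_const).differentiable
        (by norm_num)
    have hfd : (fun y : ℝ => deriv (fun z => u t z) y)
        = fun y : ℝ => fderiv ℝ (fun p : ℝ × ℝ => u p.1 p.2) (t, y) ((0:ℝ),(1:ℝ)) :=
      funext fun y => (hder y).deriv
    rw [hfd]; exact h2
  have huty : Differentiable ℝ (fun y => u t y) := fun y => (hder y).differentiableAt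
  have hAuty : Differentiable ℝ (fun y => A (u t y)) :=
    (hA.differentiable (by norm_num)).comp huty
  have huxx : HasDerivAt (fun z => u t z) (deriv (fun z => u t z) x) x :=
    (hder x).differentiableAt.hasDerivAt
  have hW : HasDerivAt (fun y => A (u t y) * deriv (fun z => u t z) y)
      (deriv (fun y => A (u t y) * deriv (fun z => u t z) y) x) x :=
    ((hAuty x).mul (huxd x)).hasDerivAt
  have hFAx : HasDerivAt (fun y => FA (u t y)) (A (u t x) * deriv (fun z => u t z) x) x :=
    (hFA' (u t x)).comp x huxx
  have hutx : HasDerivAt (fun s => u s x) (deriv (fun s => u s x) t) t := by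
    have : DifferentiableAt ℝ (fun s => u s x) t :=
      (hudiff.comp (differentiable_id.prodMk (differentiable_const x))) t
    exact this.hasDerivAt
  -- derivative of h
  have h_h : HasDerivAt h
      (Real.exp (μ * Real.arctan x) * (μ - x) * (x^2+1)^(-(3:ℝ)/2)) x := by
    have hE : HasDerivAt (fun y => Real.exp (μ * Real.arctan y))
        (Real.exp (μ * Real.arctan x) * (μ * (1/(1+x^2)))) x :=
      ((Real.hasDerivAt_arctan x).const_mul μ).exp
    have hbase : HasDerivAt (fun y : ℝ => y^2 + 1) ((2:ℕ) * x ^ (2-1)) x :=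
      (hasDerivAt_pow 2 x).add_const 1
    have hpow : HasDerivAt (fun y : ℝ => (y^2+1) ^ (-(1:ℝ)/2))
        (((2:ℕ) * x ^ (2-1)) * (-(1:ℝ)/2) * (x^2+1) ^ (-(1:ℝ)/2 - 1)) x :=
      hbase.rpow_const (Or.inl (by positivity))
    have h0 := hE.mul hpow
    have h1 : HasDerivAt h
        (Real.exp (μ * Real.arctan x) * (μ * (1/(1+x^2))) * (x^2+1) ^ (-(1:ℝ)/2)
          + Real.exp (μ * Real.arctan x)
            * (((2:ℕ) * x ^ (2-1)) * (-(1:ℝ)/2) * (x^2+1) ^ (-(1:ℝ)/2 - 1))) x :=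
      h0.congr_of_eventuallyEq (Filter.Eventually.of_forall fun y => hhdef y)
    convert h1 using 1
    rw [show (-(1:ℝ)/2 - 1) = -(3:ℝ)/2 by norm_num, hP]
    have hne : (1:ℝ) + x^2 ≠ 0 := by positivity
    field_simp
    ring
  have hpde' := hpde t x
  rw [hfdef x, hhdef x] at hpde'
  rw [hP] at hpde'
  -- main computation, uniform in the rotating pair (p, q)
  have key : ∀ p q : ℝ → ℝ, (∀ r : ℝ, HasDerivAt p (-(q r)) r) →
      (∀ r : ℝ, HasDerivAt q (p r) r) →
      (deriv (fun s => f x * Real.exp (μ * s) * (x * p s + q s) * u s x) t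
        + deriv (fun y =>
            -(Real.exp (μ * t) * (y * p t + q t)
                * (A (u t y) * deriv (fun z => u t z) y + h y * u t y))
              + Real.exp (μ * t) * p t * FA (u t y)) x = 0) := by
    intro p q hp hq
    have hexp : HasDerivAt (fun s => f x * Real.exp (μ * s))
        (f x * (Real.exp (μ * t) * (μ * 1))) t :=
      (((hasDerivAt_id t).const_mul μ).exp).const_mul (f x)
    have htrig : HasDerivAt (fun s => x * p s + q s) (x * (-(q t)) + p t) t :=
      ((hp t).const_mul x).add (hq t)
    have hd1 := (hexp.mul htrig).mul hutx
    have e1 : deriv (fun s => f x * Real.exp (μ * s) * (x * p s + q s) * u s x) t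
        = (f x * (Real.exp (μ * t) * (μ * 1)) * (x * p t + q t)
            + f x * Real.exp (μ * t) * (x * (-(q t)) + p t)) * u t x
          + f x * Real.exp (μ * t) * (x * p t + q t) * deriv (fun s => u s x) t := hd1.deriv
    have hB1 : HasDerivAt (fun y : ℝ => y * p t + q t) (1 * p t) x :=
      ((hasDerivAt_id x).mul_const (p t)).add_const (q t)
    have hB2 : HasDerivAt (fun y => A (u t y) * deriv (fun z => u t z) y + h y * u t y)
        (deriv (fun y => A (u t y) * deriv (fun z => u t z) y) x
          + (Real.exp (μ * Real.arctan x) * (μ - x) * (x^2+1)^(-(3:ℝ)/2) * u t x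
             + h x * deriv (fun z => u t z) x)) x :=
      hW.add (h_h.mul huxx)
    have hd2 := (((hB1.const_mul (Real.exp (μ * t))).mul hB2).neg).add
      (hFAx.const_mul (Real.exp (μ * t) * p t))
    have e2 : deriv (fun y =>
            -(Real.exp (μ * t) * (y * p t + q t)
                * (A (u t y) * deriv (fun z => u t z) y + h y * u t y))
              + Real.exp (μ * t) * p t * FA (u t y)) x
        = -(Real.exp (μ * t) * (1 * p t)
              * (A (u t x) * deriv (fun z => u t z) x + h x * u t x)
            + Real.exp (μ * t) * (x * p t + q t)
              * (deriv (fun y => A (u t y) * deriv (fun z => u t z) y) x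
                + (Real.exp (μ * Real.arctan x) * (μ - x) * (x^2+1)^(-(3:ℝ)/2) * u t x
                   + h x * deriv (fun z => u t z) x)))
          + Real.exp (μ * t) * p t * (A (u t x) * deriv (fun z => u t z) x) := hd2.deriv
    rw [e1, e2, hfdef x, hhdef x, hP]
    linear_combination (Real.exp (μ * t) * (x * p t + q t)) * hpde'
  constructor
  · exact key Real.cos Real.sin (fun r => Real.hasDerivAt_cos r) (fun r => Real.hasDerivAt_sin r)
  · have k2 := key Real.sin (fun s => -Real.cos s)
      (fun r => by simpa using Real.hasDerivAt_sin r)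
      (fun r => by simpa using (Real.hasDerivAt_cos r).fun_neg)
    simp only [sub_eq_add_neg]
    exact k2
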